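/- Let h be a differential polynomial of order ≤ m with m > 0, possibly involving u₁^{−1}, and set n = 2m. Then ∂·δ_u(u·h) − (u·∂ + (1/2)·u₁)·δ_u h ≡ (−1)^m·(m + 1/2)·u_n·u₁·(∂²h/∂u_m²) modulo terms of order ≤ n−1. -/

import Mathlib

/-- Partial derivative `∂/∂u_k` of an observable on the jet space
(coordinates `z 0 = u`, `z k = u_k`). -/
noncomputable def pd (k : ℕ) (F : (ℕ → ℝ) → ℝ) : (ℕ → ℝ) → ℝ :=
  fun z => deriv (fun s => F (Function.update z k s)) (z k)

/-- The total derivative `∂ = Σ_{j≥0} u_{j+1} ∂/∂u_j`. -/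
noncomputable def TD (F : (ℕ → ℝ) → ℝ) : (ℕ → ℝ) → ℝ :=
  fun z => ∑ᶠ j : ℕ, z (j + 1) * pd j F z

/-- The variational derivative `δ_u = Σ_{k≥0} (−∂)^k ∘ ∂/∂u_k`. -/
noncomputable def VD (F : (ℕ → ℝ) → ℝ) : (ℕ → ℝ) → ℝ :=
  fun z => ∑ᶠ k : ℕ, (-1 : ℝ) ^ k * (TD^[k] (pd k F)) z

namespace Evencob

set_option linter.unusedVariables false

/-- `F` has order at most `n`. -/
def Ord (n : ℕ) (F : (ℕ → ℝ) → ℝ) : Prop :=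
  ∀ z w : ℕ → ℝ, (∀ i ≤ n, z i = w i) → F z = F w

/-- `F` has order at most `N` and is a smooth function of the jet variables
away from `u₁ = 0`. -/
def Nice (N : ℕ) (F : (ℕ → ℝ) → ℝ) : Prop :=
  ∃ H : (Fin (N + 1) → ℝ) → ℝ,
    ContDiffOn ℝ (⊤ : ℕ∞) H {v | v 1 ≠ 0} ∧ ∀ z : ℕ → ℝ, F z = H (fun i => z i)

lemma fin_one_val {N : ℕ} (hN : 1 ≤ N) : ((1 : Fin (N + 1)) : ℕ) = 1 := by
  rw [Fin.val_one']; exact Nat.mod_eq_of_lt (by omega)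

lemma update_nat_fin {N : ℕ} (z : ℕ → ℝ) {k : ℕ} (hk : k ≤ N) (s : ℝ) :
    (fun i : Fin (N + 1) => Function.update z k s i) =
      Function.update (fun i : Fin (N + 1) => z i) ⟨k, by omega⟩ s := by
  funext i
  rcases eq_or_ne (i : ℕ) k with h | h
  · have hi : i = (⟨k, by omega⟩ : Fin (N + 1)) := Fin.ext h
    rw [hi]; simp
  · have hi : i ≠ (⟨k, by omega⟩ : Fin (N + 1)) := by
      intro hc; exact h (by rw [hc])
    rw [Function.update_of_ne hi, Function.update_of_ne h]

lemma Ord.mono {n n' : ℕ} {F : (ℕ → ℝ) → ℝ} (h : n ≤ n') (hF : Ord n F) : Ord n' F :=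
  fun z w hzw => hF z w fun i hi => hzw i (le_trans hi h)

lemma Ord.pd_eq_zero {n k : ℕ} {F : (ℕ → ℝ) → ℝ} (hF : Ord n F) (hk : n < k) (z : ℕ → ℝ) :
    pd k F z = 0 := by
  have : (fun s => F (Function.update z k s)) = fun _ => F z := by
    funext s
    exact hF _ _ fun i hi => Function.update_of_ne (by omega) _ _
  unfold _root_.pd
  rw [this, deriv_const]

lemma Ord.pd {n : ℕ} {F : (ℕ → ℝ) → ℝ} (hF : Ord n F) (k : ℕ) : Ord n (pd k F) := by
  intro z w hzw
  rcases le_or_gt k n with hk | hk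
  · unfold _root_.pd
    have h1 : (fun s => F (Function.update z k s)) = fun s => F (Function.update w k s) := by
      funext s
      refine hF _ _ fun i hi => ?_
      rcases eq_or_ne i k with rfl | hik
      · simp
      · rw [Function.update_of_ne hik, Function.update_of_ne hik]; exact hzw i hi
    rw [h1, hzw k hk]
  · rw [hF.pd_eq_zero hk, hF.pd_eq_zero hk]

lemma Ord.TD {n : ℕ} {F : (ℕ → ℝ) → ℝ} (hF : Ord n F) : Ord (n + 1) (TD F) := by
  intro z w hzw
  unfold _root_.TD
  refine finsum_congr fun j => ?_
  rcases le_or_gt j n with hj | hj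
  · rw [hzw (j + 1) (by omega), hF.pd j z w fun i hi => hzw i (by omega)]
  · rw [hF.pd_eq_zero hj, hF.pd_eq_zero hj, mul_zero, mul_zero]

lemma TD_eq_sum {N : ℕ} {F : (ℕ → ℝ) → ℝ} (hF : Ord N F) (z : ℕ → ℝ) :
    TD F z = ∑ j ∈ Finset.range (N + 1), z (j + 1) * pd j F z := by
  unfold _root_.TD
  refine finsum_eq_finset_sum_of_support_subset _ fun j hj => ?_
  simp only [Function.mem_support] at hj
  by_contra hc
  simp only [Finset.coe_range, Set.mem_Iio, not_lt] at hc
  rw [hF.pd_eq_zero (by omega), mul_zero] at hj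
  exact hj rfl

lemma support_fin {N : ℕ} {F : (ℕ → ℝ) → ℝ} (hF : Ord N F) (z : ℕ → ℝ) :
    (Function.support fun j => z (j + 1) * pd j F z).Finite := by
  refine Set.Finite.subset (Set.finite_Iic N) fun j hj => ?_
  simp only [Function.mem_support] at hj
  by_contra hc
  simp only [Set.mem_Iic, not_le] at hc
  rw [hF.pd_eq_zero (by omega), mul_zero] at hj
  exact hj rfl

lemma TD_zero : TD (fun _ => (0 : ℝ)) = fun _ => 0 := by
  funext z
  unfold _root_.TD _root_.pd
  simp

lemma TD_iter_zero (k : ℕ) : TD^[k] (fun _ => (0 : ℝ)) = fun _ => 0 :=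
  Function.iterate_fixed TD_zero k

lemma VD_eq_sum {N : ℕ} {F : (ℕ → ℝ) → ℝ} (hF : Ord N F) (z : ℕ → ℝ) :
    VD F z = ∑ k ∈ Finset.range (N + 1), (-1 : ℝ) ^ k * (TD^[k] (pd k F)) z := by
  unfold _root_.VD
  refine finsum_eq_finset_sum_of_support_subset _ fun k hk => ?_
  simp only [Function.mem_support] at hk
  by_contra hc
  simp only [Finset.coe_range, Set.mem_Iio, not_lt] at hc
  have hz : _root_.pd k F = fun _ => (0 : ℝ) := funext fun z => hF.pd_eq_zero (by omega) z
  rw [hz, TD_iter_zero] at hk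
  simp at hk

lemma pd_add {F G : (ℕ → ℝ) → ℝ} {k : ℕ} {z : ℕ → ℝ}
    (hF : DifferentiableAt ℝ (fun s => F (Function.update z k s)) (z k))
    (hG : DifferentiableAt ℝ (fun s => G (Function.update z k s)) (z k)) :
    pd k (fun w => F w + G w) z = pd k F z + pd k G z := by
  unfold _root_.pd
  exact deriv_add hF hG

lemma pd_mul {F G : (ℕ → ℝ) → ℝ} {k : ℕ} {z : ℕ → ℝ}
    (hF : DifferentiableAt ℝ (fun s => F (Function.update z k s)) (z k))
    (hG : DifferentiableAt ℝ (fun s => G (Function.update z k s)) (z k)) :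
    pd k (fun w => F w * G w) z = pd k F z * G z + F z * pd k G z := by
  unfold _root_.pd
  have := (hF.hasDerivAt.mul hG.hasDerivAt).deriv
  rw [Function.update_eq_self] at this
  exact this

lemma pd_const_mul (c : ℝ) (F : (ℕ → ℝ) → ℝ) (k : ℕ) (z : ℕ → ℝ) :
    pd k (fun w => c * F w) z = c * pd k F z :=
  deriv_const_mul_field c

lemma pd_coord (i k : ℕ) (z : ℕ → ℝ) :
    pd k (fun w => w i) z = if i = k then 1 else 0 := by
  unfold _root_.pd
  rcases eq_or_ne i k with rfl | h
  · simp
  · simp [Function.update_of_ne h, h]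

lemma pd_congr_on {F G : (ℕ → ℝ) → ℝ} (h : ∀ w : ℕ → ℝ, w 1 ≠ 0 → F w = G w)
    {z : ℕ → ℝ} (hz : z 1 ≠ 0) (k : ℕ) : pd k F z = pd k G z := by
  unfold _root_.pd
  apply Filter.EventuallyEq.deriv_eq
  rcases eq_or_ne k 1 with rfl | hk
  · have hmem : {s : ℝ | s ≠ 0} ∈ nhds (z 1) := compl_singleton_mem_nhds hz
    filter_upwards [hmem] with s hs
    exact h _ (by simpa using hs)
  · filter_upwards with s
    exact h _ (by rwa [Function.update_of_ne (Ne.symm hk)])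

lemma isOpen_slice {N : ℕ} : IsOpen {v : Fin (N + 1) → ℝ | v 1 ≠ 0} :=
  isOpen_ne.preimage (continuous_apply 1)

lemma hasDerivAt_update {ι : Type*} [DecidableEq ι] [Fintype ι] (v : ι → ℝ) (k : ι) (s₀ : ℝ) :
    HasDerivAt (fun s => Function.update v k s) (Pi.single k 1) s₀ := by
  rw [hasDerivAt_pi]
  intro i
  rcases eq_or_ne i k with rfl | h
  · simpa using (hasDerivAt_id' s₀)
  · simpa [Function.update_of_ne h, Pi.single_eq_of_ne h] using (hasDerivAt_const s₀ (v i))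

lemma key_line {N : ℕ} {H : (Fin (N + 1) → ℝ) → ℝ}
    (hH : ContDiffOn ℝ (⊤ : ℕ∞) H {v | v 1 ≠ 0})
    {v : Fin (N + 1) → ℝ} (hv : v 1 ≠ 0) (k : Fin (N + 1)) :
    HasDerivAt (fun s => H (Function.update v k s)) (fderiv ℝ H v (Pi.single k 1)) (v k) := by
  have hdiff : DifferentiableAt ℝ H v := by
    have := hH.contDiffAt (isOpen_slice.mem_nhds hv)
    exact this.differentiableAt (by simp)
  have hline := hasDerivAt_update v k (v k)
  have h2 : HasFDerivAt H (fderiv ℝ H v) (Function.update v k (v k)) := by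
    rw [Function.update_eq_self]; exact hdiff.hasFDerivAt
  exact h2.comp_hasDerivAt (v k) hline

lemma Nice.ord {N : ℕ} {F : (ℕ → ℝ) → ℝ} (hF : Nice N F) : Ord N F := by
  obtain ⟨H, _, e⟩ := hF
  intro z w hzw
  rw [e z, e w]
  congr 1
  funext i
  exact hzw i (by omega)

lemma nice_const {N : ℕ} (c : ℝ) : Nice N (fun _ => c) :=
  ⟨fun _ => c, contDiffOn_const, fun _ => rfl⟩

lemma nice_coord {N j : ℕ} (hj : j ≤ N) : Nice N (fun z => z j) :=
  ⟨fun v => v ⟨j, by omega⟩, (contDiff_apply ℝ ℝ _).contDiffOn, fun z => rfl⟩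

lemma Nice.congr {N : ℕ} {F G : (ℕ → ℝ) → ℝ} (hF : Nice N F) (h : ∀ z, F z = G z) :
    Nice N G := by
  obtain ⟨H, hH, hFH⟩ := hF
  exact ⟨H, hH, fun z => (h z).symm.trans (hFH z)⟩

lemma nice_add {N : ℕ} {F G : (ℕ → ℝ) → ℝ} (hF : Nice N F) (hG : Nice N G) :
    Nice N (fun z => F z + G z) := by
  obtain ⟨H1, h1, e1⟩ := hF; obtain ⟨H2, h2, e2⟩ := hG
  exact ⟨fun v => H1 v + H2 v, h1.add h2, fun z => by simp only []; rw [e1, e2]⟩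

lemma nice_mul {N : ℕ} {F G : (ℕ → ℝ) → ℝ} (hF : Nice N F) (hG : Nice N G) :
    Nice N (fun z => F z * G z) := by
  obtain ⟨H1, h1, e1⟩ := hF; obtain ⟨H2, h2, e2⟩ := hG
  exact ⟨fun v => H1 v * H2 v, h1.mul h2, fun z => by simp only []; rw [e1, e2]⟩

lemma nice_mono {N N' : ℕ} {F : (ℕ → ℝ) → ℝ} (h1 : 1 ≤ N) (hNN : N ≤ N') (hF : Nice N F) :
    Nice N' F := by
  obtain ⟨H, hH, e⟩ := hF
  refine ⟨fun v => H (fun i : Fin (N + 1) => v ⟨i, by omega⟩), ?_, fun z => e z⟩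
  have hres : ContDiff ℝ (⊤ : ℕ∞) fun v : Fin (N' + 1) → ℝ =>
      (fun i : Fin (N + 1) => v ⟨i, by omega⟩) :=
    contDiff_pi.2 fun i => contDiff_apply ℝ ℝ _
  refine ContDiffOn.comp hH hres.contDiffOn ?_
  intro v hv
  simp only [Set.mem_setOf_eq] at hv ⊢
  have : ((1 : Fin (N + 1)) : ℕ) = 1 := fin_one_val h1
  rw [show (⟨((1 : Fin (N + 1)) : ℕ), by omega⟩ : Fin (N' + 1)) = 1 by
    apply Fin.ext; rw [this, fin_one_val (by omega)]]
  exact hv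

lemma nice_finset_sum {N : ℕ} {ι : Type*} (s : Finset ι) (f : ι → (ℕ → ℝ) → ℝ)
    (h : ∀ i ∈ s, Nice N (f i)) : Nice N (fun z => ∑ i ∈ s, f i z) := by
  classical
  induction s using Finset.induction_on with
  | empty => exact (nice_const 0).congr (by simp)
  | @insert a s' hnot ih =>
      have := nice_add (h a (by simp)) (ih fun i hi => h i (by simp [hi]))
      exact this.congr fun z => by rw [Finset.sum_insert hnot]

lemma nice_diffAt {N : ℕ} {F : (ℕ → ℝ) → ℝ} (hF : Nice N F) (h1 : 1 ≤ N)
    {z : ℕ → ℝ} (hz : z 1 ≠ 0) (k : ℕ) :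
    DifferentiableAt ℝ (fun s => F (Function.update z k s)) (z k) := by
  obtain ⟨H, hH, e⟩ := hF
  rcases le_or_gt k N with hk | hk
  · have heq : (fun s => F (Function.update z k s)) =
        fun s => H (Function.update (fun i : Fin (N + 1) => z i) ⟨k, by omega⟩ s) := by
      funext s
      rw [e, update_nat_fin z hk s]
    rw [heq]
    have hv : (fun i : Fin (N + 1) => z i) 1 ≠ 0 := by
      show z ((1 : Fin (N + 1)) : ℕ) ≠ 0
      rwa [fin_one_val h1]
    have := (key_line (v := fun i : Fin (N + 1) => z i) hH hv ⟨k, by omega⟩).differentiableAt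
    simpa using this
  · have heq : (fun s => F (Function.update z k s)) = fun _ => F z := by
      funext s
      exact (Nice.ord ⟨H, hH, e⟩) _ _ fun i hi => Function.update_of_ne (by omega) _ _
    rw [heq]
    exact differentiableAt_const _

lemma nice_pd {N : ℕ} {F : (ℕ → ℝ) → ℝ} (hF : Nice N F) (k : ℕ) :
    Nice N (pd k F) := by
  obtain ⟨H, hH, e⟩ := hF
  rcases le_or_gt k N with hk | hk
  · set k' : Fin (N + 1) := ⟨k, by omega⟩ with hk'
    refine ⟨fun v => deriv (fun s => H (Function.update v k' s)) (v k'), ?_, ?_⟩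
    · have hfd : ContDiffOn ℝ (⊤ : ℕ∞) (fderiv ℝ H) {v | v 1 ≠ 0} :=
        hH.fderiv_of_isOpen isOpen_slice (by norm_cast)
      have hsm : ContDiffOn ℝ (⊤ : ℕ∞)
          (fun v => fderiv ℝ H v (Pi.single k' 1)) {v | v 1 ≠ 0} :=
        hfd.clm_apply contDiffOn_const
      refine hsm.congr fun v hv => ?_
      exact ((key_line hH hv k').deriv)
    · intro z
      show deriv (fun s => F (Function.update z k s)) (z k) = _
      have heq : (fun s => F (Function.update z k s)) =
          fun s => H (Function.update (fun i : Fin (N + 1) => z i) k' s) := by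
        funext s
        rw [e, update_nat_fin z hk s]
      rw [heq]
  · have hz : ∀ z, pd k F z = 0 := fun z => (Nice.ord ⟨H, hH, e⟩).pd_eq_zero hk z
    exact ⟨fun _ => 0, contDiffOn_const, fun z => by rw [hz]⟩


lemma nice_TD {N : ℕ} {F : (ℕ → ℝ) → ℝ} (h1 : 1 ≤ N) (hF : Nice N F) :
    Nice (N + 1) (TD F) := by
  have hOrd : Ord N F := hF.ord
  have heq : ∀ z, TD F z = ∑ j ∈ Finset.range (N + 1), z (j + 1) * pd j F z :=
    TD_eq_sum hOrd
  refine Nice.congr ?_ fun z => (heq z).symm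
  refine nice_finset_sum _ _ fun j hj => ?_
  simp only [Finset.mem_range] at hj
  exact nice_mul (nice_coord (by omega)) (nice_mono h1 (by omega) (nice_pd hF j))

lemma nice_TD_iter {N : ℕ} {F : (ℕ → ℝ) → ℝ} (h1 : 1 ≤ N) (hF : Nice N F) (j : ℕ) :
    Nice (N + j) (TD^[j] F) := by
  induction j with
  | zero => exact hF
  | succ j ih =>
      have := nice_TD (by omega) ih
      rw [Function.iterate_succ_apply']
      exact this.congr fun z => rfl

lemma TD_congr_on {F G : (ℕ → ℝ) → ℝ} (h : ∀ w : ℕ → ℝ, w 1 ≠ 0 → F w = G w)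
    {z : ℕ → ℝ} (hz : z 1 ≠ 0) : TD F z = TD G z := by
  unfold _root_.TD
  exact finsum_congr fun j => by rw [pd_congr_on h hz j]

lemma TD_iter_congr_on (k : ℕ) : ∀ {F G : (ℕ → ℝ) → ℝ},
    (∀ w : ℕ → ℝ, w 1 ≠ 0 → F w = G w) →
    ∀ {z : ℕ → ℝ}, z 1 ≠ 0 → TD^[k] F z = TD^[k] G z := by
  induction k with
  | zero => intro F G h z hz; exact h z hz
  | succ k ih =>
      intro F G h z hz
      rw [Function.iterate_succ_apply, Function.iterate_succ_apply]
      exact ih (fun w hw => TD_congr_on h hw) hz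

lemma TD_add_on {N M : ℕ} {F G : (ℕ → ℝ) → ℝ} (hN : 1 ≤ N) (hM : 1 ≤ M)
    (hF : Nice N F) (hG : Nice M G) {z : ℕ → ℝ} (hz : z 1 ≠ 0) :
    TD (fun w => F w + G w) z = TD F z + TD G z := by
  unfold _root_.TD
  have hstep : ∀ j : ℕ, z (j + 1) * pd j (fun w => F w + G w) z
      = z (j + 1) * pd j F z + z (j + 1) * pd j G z := by
    intro j
    rw [pd_add (nice_diffAt hF hN hz j) (nice_diffAt hG hM hz j), mul_add]
  rw [finsum_congr hstep]
  exact finsum_add_distrib (support_fin hF.ord z) (support_fin hG.ord z)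

lemma TD_mul_on {N M : ℕ} {F G : (ℕ → ℝ) → ℝ} (hN : 1 ≤ N) (hM : 1 ≤ M)
    (hF : Nice N F) (hG : Nice M G) {z : ℕ → ℝ} (hz : z 1 ≠ 0) :
    TD (fun w => F w * G w) z = TD F z * G z + F z * TD G z := by
  unfold _root_.TD
  have hstep : ∀ j : ℕ, z (j + 1) * pd j (fun w => F w * G w) z
      = (z (j + 1) * pd j F z) * G z + F z * (z (j + 1) * pd j G z) := by
    intro j
    rw [pd_mul (nice_diffAt hF hN hz j) (nice_diffAt hG hM hz j)]
    ring
  rw [finsum_congr hstep]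
  rw [finsum_add_distrib ((support_fin hF.ord z).subset ?_) ((support_fin hG.ord z).subset ?_)]
  · rw [← finsum_mul _ _, ← mul_finsum _ _]
  · intro j hj
    simp only [Function.mem_support] at hj ⊢
    intro hc; exact hj (by rw [hc, zero_mul])
  · intro j hj
    simp only [Function.mem_support] at hj ⊢
    intro hc; exact hj (by rw [hc, mul_zero])

lemma TD_coord (i : ℕ) (z : ℕ → ℝ) : TD (fun w => w i) z = z (i + 1) := by
  unfold _root_.TD
  have hstep : ∀ j : ℕ, z (j + 1) * pd j (fun w => w i) z
      = if j = i then z (i + 1) else 0 := by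
    intro j
    rw [pd_coord]
    rcases eq_or_ne i j with rfl | h
    · simp
    · simp [h, Ne.symm h]
  rw [finsum_congr hstep]
  rw [finsum_eq_single _ i (fun j hj => by simp [hj])]
  simp

lemma TD_const_mul {N : ℕ} (c : ℝ) {F : (ℕ → ℝ) → ℝ} (hF : Ord N F) (z : ℕ → ℝ) :
    TD (fun w => c * F w) z = c * TD F z := by
  unfold _root_.TD
  have hstep : ∀ j : ℕ, z (j + 1) * pd j (fun w => c * F w) z
      = c * (z (j + 1) * pd j F z) := by
    intro j
    rw [pd_const_mul]
    ring
  rw [finsum_congr hstep]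
  exact (mul_finsum _ _).symm

lemma TD_sum_on {N : ℕ} {ι : Type*} (hN : 1 ≤ N) (s : Finset ι) (f : ι → (ℕ → ℝ) → ℝ)
    (h : ∀ i ∈ s, Nice N (f i)) {z : ℕ → ℝ} (hz : z 1 ≠ 0) :
    TD (fun w => ∑ i ∈ s, f i w) z = ∑ i ∈ s, TD (f i) z := by
  classical
  induction s using Finset.induction_on with
  | empty =>
      simp only [Finset.sum_empty]
      rw [show (fun _ : ℕ → ℝ => (0 : ℝ)) = fun _ => (0:ℝ) from rfl]
      exact congrFun TD_zero z
  | @insert a s' hnot ih =>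
      have h1 : TD (fun w => f a w + ∑ i ∈ s', f i w) z
          = TD (f a) z + TD (fun w => ∑ i ∈ s', f i w) z :=
        TD_add_on hN hN (h a (by simp))
          (nice_finset_sum s' f fun i hi => h i (by simp [hi])) hz
      calc TD (fun w => ∑ i ∈ insert a s', f i w) z
          = TD (fun w => f a w + ∑ i ∈ s', f i w) z := by
            congr 1; funext w; rw [Finset.sum_insert hnot]
        _ = TD (f a) z + ∑ i ∈ s', TD (f i) z := by
            rw [h1, ih fun i hi => h i (by simp [hi])]
        _ = ∑ i ∈ insert a s', TD (f i) z := by rw [Finset.sum_insert hnot]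


/-- Top-order behaviour of iterated total derivatives:
`∂^j F ≡ u_{N+j} ∂F/∂u_N` modulo order `≤ N+j−1`. -/
lemma iter_top {N : ℕ} (h1 : 1 ≤ N) {F : (ℕ → ℝ) → ℝ} (hF : Nice N F) :
    ∀ j : ℕ, 1 ≤ j → ∃ E : (ℕ → ℝ) → ℝ, Nice (N + j - 1) E ∧
      ∀ z : ℕ → ℝ, z 1 ≠ 0 → TD^[j] F z = z (N + j) * pd N F z + E z := by
  intro j hj
  induction j with
  | zero => omega
  | succ j ih =>
      rcases Nat.eq_or_lt_of_le hj with h0 | hlt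
      · -- j + 1 = 1, i.e. j = 0
        have hj0 : j = 0 := by omega
        subst hj0
        refine ⟨fun z => ∑ i ∈ Finset.range N, z (i + 1) * pd i F z, ?_, ?_⟩
        · have : N + 1 - 1 = N := by omega
          rw [this]
          refine nice_finset_sum _ _ fun i hi => ?_
          simp only [Finset.mem_range] at hi
          exact nice_mul (nice_coord (by omega)) (nice_pd hF i)
        · intro z hz
          rw [Function.iterate_one, TD_eq_sum hF.ord z, Finset.sum_range_succ]
          ring
      · -- j ≥ 1
        obtain ⟨E, hE, heq⟩ := ih (by omega)
        have hNj1 : 1 ≤ N + j - 1 := by omega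
        refine ⟨fun z => z (N + j) * TD (pd N F) z + TD E z, ?_, ?_⟩
        · have hrw : N + (j + 1) - 1 = N + j := by omega
          rw [hrw]
          refine nice_add (nice_mul (nice_coord (by omega)) ?_) ?_
          · exact nice_mono (by omega) (by omega) (nice_TD h1 (nice_pd hF N))
          · have := nice_TD hNj1 hE
            exact nice_mono (by omega) (by omega) this
        · intro z hz
          rw [Function.iterate_succ_apply']
          have hcongr : TD (TD^[j] F) z
              = TD (fun w => w (N + j) * pd N F w + E w) z :=
            TD_congr_on (fun w hw => heq w hw) hz
          rw [hcongr]
          have hGnice : Nice (N + j) (fun w => w (N + j) * pd N F w) :=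
            nice_mul (nice_coord le_rfl) (nice_mono h1 (by omega) (nice_pd hF N))
          have hadd := TD_add_on (N := N + j) (M := N + j - 1) (by omega) hNj1
            hGnice hE hz
          rw [hadd]
          have hmul := TD_mul_on (N := N + j) (M := N) (by omega) h1
            (nice_coord le_rfl) (nice_pd hF N) hz
          rw [hmul, TD_coord]
          have : N + (j + 1) = N + j + 1 := by omega
          rw [this]
          ring

/-- Leibniz-type expansion for `∂^k (u·p)`. -/
lemma leib {m : ℕ} (h1 : 1 ≤ m) {p : (ℕ → ℝ) → ℝ} (hp : Nice m p) :
    ∀ k : ℕ, 1 ≤ k → k ≤ m → ∃ R : (ℕ → ℝ) → ℝ,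
      Nice (max 1 (m + k - 2)) R ∧ (k = 1 → ∀ z, R z = 0) ∧
      ∀ z : ℕ → ℝ, z 1 ≠ 0 →
        TD^[k] (fun w => w 0 * p w) z
          = z 0 * TD^[k] p z + (k : ℝ) * (z 1 * TD^[k - 1] p z) + R z := by
  intro k hk
  induction k with
  | zero => omega
  | succ k ih =>
      intro hkm
      rcases Nat.eq_or_lt_of_le hk with h0 | hlt
      · -- k + 1 = 1
        have hk0 : k = 0 := by omega
        subst hk0
        refine ⟨fun _ => 0, nice_const 0, fun _ _ => rfl, fun z hz => ?_⟩
        rw [Function.iterate_one]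
        have := TD_mul_on (N := m) (M := m) h1 h1 (nice_coord (N := m) (j := 0) (by omega)) hp hz
        rw [this, TD_coord]
        simp
        ring
      · -- k ≥ 1, k + 1 ≤ m, so m ≥ 2
        have hk1 : 1 ≤ k := by omega
        have hm2 : 2 ≤ m := by omega
        obtain ⟨R, hR, hR1, heq⟩ := ih hk1 (by omega)
        have hmk2 : m + (k + 1) - 2 = m + k - 1 := by omega
        refine ⟨fun z => (k : ℝ) * (z 2 * TD^[k - 1] p z) + TD R z, ?_, ?_, ?_⟩
        · rw [hmk2]
          have hmax : max 1 (m + k - 1) = m + k - 1 := by omega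
          rw [hmax]
          refine nice_add (nice_mul (nice_const _) (nice_mul (nice_coord (by omega)) ?_)) ?_
          · have := nice_TD_iter h1 hp (k - 1)
            exact nice_mono (by omega) (by omega) this
          · -- TD R is Nice (m + k - 1)
            rcases Nat.eq_or_lt_of_le hk1 with hk1' | hk2
            · -- k = 1 : R = 0
              have hRz : R = fun _ => 0 := funext fun z => hR1 hk1'.symm z
              rw [hRz, TD_zero]
              exact nice_const 0
            · have hmax1 : max 1 (m + k - 2) = m + k - 2 := by omega
              have := nice_TD (by omega) hR
              rw [hmax1] at this
              exact nice_mono (by omega) (by omega)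
                (this.congr fun z => rfl) |>.congr fun z => by
                  congr 1
              
        · intro hc; omega
        · intro z hz
          rw [Function.iterate_succ_apply']
          have hcongr : TD (TD^[k] (fun w => w 0 * p w)) z
              = TD (fun w => w 0 * TD^[k] p w + (k : ℝ) * (w 1 * TD^[k - 1] p w) + R w) z :=
            TD_congr_on (fun w hw => heq w hw) hz
          rw [hcongr]
          -- now expand
          have hN1 : Nice (m + k) (fun w => w 0 * TD^[k] p w) :=
            nice_mul (nice_coord (by omega)) (nice_TD_iter h1 hp k)
          have hN2 : Nice (m + k) (fun w => (k : ℝ) * (w 1 * TD^[k - 1] p w)) := by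
            refine nice_mul (nice_const _) (nice_mul (nice_coord (by omega)) ?_)
            have := nice_TD_iter h1 hp (k - 1)
            exact nice_mono (by omega) (by omega) this
          have hN12 : Nice (m + k) (fun w => w 0 * TD^[k] p w + (k : ℝ) * (w 1 * TD^[k - 1] p w)) :=
            nice_add hN1 hN2
          have hNR : Nice (max 1 (m + k - 2)) R := hR
          have hadd1 := TD_add_on (N := m + k) (M := max 1 (m + k - 2)) (by omega) (by omega)
            hN12 hNR hz
          rw [hadd1]
          have hadd2 := TD_add_on (N := m + k) (M := m + k) (by omega) (by omega) hN1 hN2 hz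
          rw [hadd2]
          have hmul1 := TD_mul_on (N := m + k) (M := m + k) (by omega) (by omega)
            (nice_coord (N := m + k) (j := 0) (by omega))
            (nice_mono (N := m + k) (N' := m + k) (by omega) (by omega) (nice_TD_iter h1 hp k)) hz
          rw [hmul1, TD_coord]
          have hcm : TD (fun w => (k : ℝ) * (w 1 * TD^[k - 1] p w)) z
              = (k : ℝ) * TD (fun w => w 1 * TD^[k - 1] p w) z := by
            refine TD_const_mul (N := m + k) _ ?_ z
            exact (nice_mul (nice_coord (N := m + k) (j := 1) (by omega))
              (nice_mono (N := m + (k - 1)) (N' := m + k) (by omega) (by omega)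
                (nice_TD_iter h1 hp (k - 1)))).ord
          rw [hcm]
          have hmul2 := TD_mul_on (N := m + k) (M := m + k) (by omega) (by omega)
            (nice_coord (N := m + k) (j := 1) (by omega))
            (nice_mono (N := m + (k - 1)) (N' := m + k) (by omega) (by omega)
              (nice_TD_iter h1 hp (k - 1))) hz
          rw [hmul2, TD_coord]
          have hit1 : TD (TD^[k] p) z = TD^[k + 1] p z :=
            (Function.iterate_succ_apply' TD k p ▸ rfl : TD^[k+1] p z = TD (TD^[k] p) z).symm
          have hit2 : TD (TD^[k - 1] p) z = TD^[k] p z := by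
            have hkk : k - 1 + 1 = k := by omega
            conv_rhs => rw [← hkk]
            rw [Function.iterate_succ_apply']
          rw [hit1, hit2]
          have hcast : ((k : ℝ) + 1) = ((k + 1 : ℕ) : ℝ) := by push_cast; ring
          have hsub : (k + 1) - 1 = k := by omega
          rw [hsub]
          push_cast
          ring


lemma Ord.add {n : ℕ} {F G : (ℕ → ℝ) → ℝ} (hF : Ord n F) (hG : Ord n G) :
    Ord n (fun z => F z + G z) := fun z w h => by simp only []; rw [hF z w h, hG z w h]

lemma Ord.mul {n : ℕ} {F G : (ℕ → ℝ) → ℝ} (hF : Ord n F) (hG : Ord n G) :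
    Ord n (fun z => F z * G z) := fun z w h => by simp only []; rw [hF z w h, hG z w h]

lemma ord_const {n : ℕ} (c : ℝ) : Ord n (fun _ => c) := fun _ _ _ => rfl

lemma ord_coord {n j : ℕ} (hj : j ≤ n) : Ord n (fun z => z j) := fun z w h => h j hj

lemma ord_finset_sum {n : ℕ} {ι : Type*} (s : Finset ι) (f : ι → (ℕ → ℝ) → ℝ)
    (h : ∀ i ∈ s, Ord n (f i)) : Ord n (fun z => ∑ i ∈ s, f i z) := by
  intro z w hzw
  exact Finset.sum_congr rfl fun i hi => h i hi z w hzw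

lemma Ord.congr {n : ℕ} {F G : (ℕ → ℝ) → ℝ} (hF : Ord n F) (h : ∀ z, F z = G z) :
    Ord n G := fun z w hzw => by rw [← h z, ← h w]; exact hF z w hzw

end Evencob

open Evencob in
/-- Lemma (even cob): for `h` of order `≤ m`, `m > 0` (possibly involving `u₁^{−1}`),
with `n = 2m`:
`∂·δ_u(u·h) − (u∂ + (1/2)u₁)·δ_u h ≡ (−1)^m (m + 1/2) u_n u₁ ∂²h/∂u_m²` modulo
terms of order `≤ n−1`. -/
theorem evencob (m : ℕ) (hm : 0 < m) (h : (ℕ → ℝ) → ℝ)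
    (horder : ∀ z w : ℕ → ℝ, (∀ i ≤ m, z i = w i) → h z = h w)
    (hsmooth : ∃ H : (Fin (m + 1) → ℝ) → ℝ,
      ContDiffOn ℝ (⊤ : ℕ∞) H {v | v 1 ≠ 0} ∧ ∀ z : ℕ → ℝ, h z = H (fun i => z i)) :
    ∃ a : (ℕ → ℝ) → ℝ,
      (∀ z w : ℕ → ℝ, (∀ i ≤ 2 * m - 1, z i = w i) → a z = a w) ∧
      ∀ z : ℕ → ℝ, z 1 ≠ 0 →
        TD (VD (fun w => w 0 * h w)) z
            - (z 0 * TD (VD h) z + (1 / 2) * z 1 * VD h z)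
          = (-1 : ℝ) ^ m * ((m : ℝ) + 1 / 2) * z (2 * m) * z 1 * pd m (pd m h) z
            + a z := by
  classical
  obtain ⟨mm, rfl⟩ : ∃ mm, m = mm + 1 := ⟨m - 1, by omega⟩
  have h1m : 1 ≤ mm + 1 := by omega
  have hNh : Nice (mm + 1) h := hsmooth
  have hOh : Ord (mm + 1) h := horder
  have hOUH : Ord (mm + 1) (fun w => w 0 * h w) :=
    (ord_coord (by omega)).mul hOh
  -- Leibniz remainders
  have hex : ∀ k : ℕ, ∃ Rk : (ℕ → ℝ) → ℝ,
      1 ≤ k → k ≤ mm + 1 →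
        Nice (max 1 (mm + 1 + k - 2)) Rk ∧ (k = 1 → ∀ z, Rk z = 0) ∧
        ∀ z : ℕ → ℝ, z 1 ≠ 0 →
          TD^[k] (fun w => w 0 * pd k h w) z
            = z 0 * TD^[k] (pd k h) z + (k : ℝ) * (z 1 * TD^[k - 1] (pd k h) z) + Rk z := by
    intro k
    by_cases hc : 1 ≤ k ∧ k ≤ mm + 1
    · obtain ⟨R0, ha, hb, hc'⟩ := leib h1m (nice_pd hNh k) k hc.1 hc.2
      exact ⟨R0, fun _ _ => ⟨ha, hb, hc'⟩⟩
    · exact ⟨fun _ => 0, fun ha hb => absurd ⟨ha, hb⟩ hc⟩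
  choose R hRspec using hex
  -- top-order remainder for ∂^{m} h_m
  obtain ⟨Et, hEtN, hEteq⟩ := iter_top h1m (nice_pd hNh (mm + 1)) (mm + 1) h1m
  have hEtN' : Nice (2 * mm + 1) Et := by
    have hrw : mm + 1 + (mm + 1) - 1 = 2 * mm + 1 := by omega
    rwa [hrw] at hEtN
  -- the correction sum X
  set Xf : (ℕ → ℝ) → ℝ := fun w => ∑ k ∈ Finset.range (mm + 1),
      (-1 : ℝ) ^ (k + 1) *
        ((((k + 1) : ℕ) : ℝ) * (w 1 * TD^[k] (pd (k + 1) h) w) + R (k + 1) w) with hXfdef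
  have hNice_T : ∀ k, k ≤ mm → Nice (2 * mm + 1) (TD^[k] (pd (k + 1) h)) := by
    intro k hk
    exact nice_mono (by omega) (by omega) (nice_TD_iter h1m (nice_pd hNh (k + 1)) k)
  have hNice_R : ∀ k, k ≤ mm → Nice (2 * mm + 1) (R (k + 1)) := by
    intro k hk
    refine nice_mono (le_max_left 1 _) (max_le (by omega) (by omega))
      ((hRspec (k + 1) (by omega) (by omega)).1)
  have hNXf : Nice (2 * mm + 1) Xf := by
    rw [hXfdef]
    refine nice_finset_sum _ _ fun k hk => ?_
    simp only [Finset.mem_range] at hk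
    refine nice_mul (nice_const _) (nice_add (nice_mul (nice_const _)
      (nice_mul (nice_coord (by omega)) (hNice_T k (by omega)))) (hNice_R k (by omega)))
  have hNVDh : Nice (2 * mm + 2) (VD h) := by
    refine Nice.congr (nice_finset_sum (Finset.range (mm + 1 + 1))
      (fun k => fun w => (-1 : ℝ) ^ k * TD^[k] (pd k h) w) fun k hk => ?_)
      fun z => (VD_eq_sum hOh z).symm
    simp only [Finset.mem_range] at hk
    exact nice_mul (nice_const _)
      (nice_mono (by omega) (by omega) (nice_TD_iter h1m (nice_pd hNh k) k))
  -- product rule for pd of u*h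
  have hpdUH : ∀ k : ℕ, ∀ w : ℕ → ℝ, w 1 ≠ 0 → pd k (fun v => v 0 * h v) w
      = (if (0 : ℕ) = k then (1 : ℝ) else 0) * h w + w 0 * pd k h w := by
    intro k w hw
    rw [pd_mul (nice_diffAt (nice_coord (N := mm + 1) (j := 0) (by omega)) h1m hw k)
      (nice_diffAt hNh h1m hw k), pd_coord]
  -- Claim 1 : δ(u h) = h + u δh + X on S
  have claim1 : ∀ z : ℕ → ℝ, z 1 ≠ 0 →
      VD (fun w => w 0 * h w) z = h z + (z 0 * VD h z + Xf z) := by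
    intro z hz
    rw [VD_eq_sum hOUH z, Finset.sum_range_succ']
    have e0 : (-1 : ℝ) ^ 0 * TD^[0] (pd 0 (fun w => w 0 * h w)) z
        = h z + z 0 * pd 0 h z := by
      simp only [pow_zero, one_mul, Function.iterate_zero, id_eq]
      rw [hpdUH 0 z hz]
      norm_num
    have eS : ∀ k ∈ Finset.range (mm + 1),
        (-1 : ℝ) ^ (k + 1) * TD^[k + 1] (pd (k + 1) (fun w => w 0 * h w)) z
        = (-1 : ℝ) ^ (k + 1) * (z 0 * TD^[k + 1] (pd (k + 1) h) z)
          + (-1 : ℝ) ^ (k + 1) *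
            ((((k + 1) : ℕ) : ℝ) * (z 1 * TD^[k] (pd (k + 1) h) z) + R (k + 1) z) := by
      intro k hk
      simp only [Finset.mem_range] at hk
      have hcongr : TD^[k + 1] (pd (k + 1) (fun w => w 0 * h w)) z
          = TD^[k + 1] (fun w => w 0 * pd (k + 1) h w) z := by
        refine TD_iter_congr_on (k + 1) (fun w hw => ?_) hz
        rw [hpdUH (k + 1) w hw]
        simp
      rw [hcongr, (hRspec (k + 1) (by omega) (by omega)).2.2 z hz]
      have hk1 : (k + 1) - 1 = k := by omega
      rw [hk1]
      ring
    rw [Finset.sum_congr rfl eS, Finset.sum_add_distrib, e0]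
    rw [VD_eq_sum hOh z,
      Finset.sum_range_succ' (fun k => (-1 : ℝ) ^ k * TD^[k] (pd k h) z) (mm + 1)]
    simp only [hXfdef, pow_zero, one_mul, Function.iterate_zero, id_eq]
    rw [mul_add, Finset.mul_sum]
    have ealign : ∑ k ∈ Finset.range (mm + 1),
        z 0 * ((-1 : ℝ) ^ (k + 1) * TD^[k + 1] (pd (k + 1) h) z)
        = ∑ k ∈ Finset.range (mm + 1),
          (-1 : ℝ) ^ (k + 1) * (z 0 * TD^[k + 1] (pd (k + 1) h) z) :=
      Finset.sum_congr rfl fun k _ => by ring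
    rw [ealign]
    ring
  -- main TD expansion
  have hTDmain : ∀ z : ℕ → ℝ, z 1 ≠ 0 → TD (VD (fun w => w 0 * h w)) z
      = TD h z + ((z 1 * VD h z + z 0 * TD (VD h) z) + TD Xf z) := by
    intro z hz
    rw [TD_congr_on claim1 hz]
    rw [TD_add_on (N := mm + 1) (M := 2 * mm + 2) h1m (by omega) hNh
      (nice_add (nice_mul (nice_coord (by omega)) hNVDh)
        (nice_mono (by omega) (by omega) hNXf)) hz]
    rw [TD_add_on (N := 2 * mm + 2) (M := 2 * mm + 1) (by omega) (by omega)
      (nice_mul (nice_coord (by omega)) hNVDh) hNXf hz]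
    rw [TD_mul_on (N := 2 * mm + 2) (M := 2 * mm + 2) (by omega) (by omega)
      (nice_coord (by omega)) hNVDh hz, TD_coord]
  -- expansion of TD X
  have hTDX : ∀ z : ℕ → ℝ, z 1 ≠ 0 → TD Xf z = ∑ k ∈ Finset.range (mm + 1),
      ((-1 : ℝ) ^ (k + 1) * ((((k + 1) : ℕ) : ℝ) * (z 2 * TD^[k] (pd (k + 1) h) z))
        + (-1 : ℝ) ^ (k + 1) * ((((k + 1) : ℕ) : ℝ) * (z 1 * TD^[k + 1] (pd (k + 1) h) z))
        + (-1 : ℝ) ^ (k + 1) * TD (R (k + 1)) z) := by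
    intro z hz
    have hXsum : TD Xf z = ∑ k ∈ Finset.range (mm + 1), TD (fun w =>
        (-1 : ℝ) ^ (k + 1) *
          ((((k + 1) : ℕ) : ℝ) * (w 1 * TD^[k] (pd (k + 1) h) w) + R (k + 1) w)) z := by
      rw [hXfdef]
      refine TD_sum_on (N := 2 * mm + 1) (by omega) _ _ (fun k hk => ?_) hz
      simp only [Finset.mem_range] at hk
      exact nice_mul (nice_const _) (nice_add (nice_mul (nice_const _)
        (nice_mul (nice_coord (by omega)) (hNice_T k (by omega)))) (hNice_R k (by omega)))
    rw [hXsum]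
    refine Finset.sum_congr rfl fun k hk => ?_
    simp only [Finset.mem_range] at hk
    have hin : Nice (2 * mm + 1) (fun w =>
        (((k + 1) : ℕ) : ℝ) * (w 1 * TD^[k] (pd (k + 1) h) w)) :=
      nice_mul (nice_const _) (nice_mul (nice_coord (by omega)) (hNice_T k (by omega)))
    have hOin : Ord (2 * mm + 1) (fun w =>
        (((k + 1) : ℕ) : ℝ) * (w 1 * TD^[k] (pd (k + 1) h) w) + R (k + 1) w) :=
      (nice_add hin (hNice_R k (by omega))).ord
    rw [TD_const_mul (N := 2 * mm + 1) _ hOin z]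
    rw [TD_add_on (N := 2 * mm + 1) (M := 2 * mm + 1) (by omega) (by omega)
      hin (hNice_R k (by omega)) hz]
    have hOin2 : Ord (2 * mm + 1) (fun w => w 1 * TD^[k] (pd (k + 1) h) w) :=
      (nice_mul (nice_coord (by omega)) (hNice_T k (by omega))).ord
    rw [TD_const_mul (N := 2 * mm + 1) _ hOin2 z]
    rw [TD_mul_on (N := 2 * mm + 1) (M := 2 * mm + 1) (by omega) (by omega)
      (nice_coord (N := 2 * mm + 1) (j := 1) (by omega)) (hNice_T k (by omega)) hz,
      TD_coord]
    rw [← Function.iterate_succ_apply' TD k]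
    ring
  -- the low-order remainder
  refine ⟨fun w => (TD h w + ∑ k ∈ Finset.range (mm + 1),
        (-1 : ℝ) ^ (k + 1) * ((((k + 1) : ℕ) : ℝ) * (w 2 * TD^[k] (pd (k + 1) h) w)))
      + ((1 / 2 : ℝ) * (w 1 * ∑ k ∈ Finset.range (mm + 1), (-1 : ℝ) ^ k * TD^[k] (pd k h) w)
        + (1 / 2 : ℝ) * ((-1 : ℝ) ^ (mm + 1) * (w 1 * Et w)))
      + (∑ k ∈ Finset.range mm,
          (-1 : ℝ) ^ (k + 1) * ((((k + 1) : ℕ) : ℝ) * (w 1 * TD^[k + 1] (pd (k + 1) h) w))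
        + (-1 : ℝ) ^ (mm + 1) * ((((mm + 1) : ℕ) : ℝ) * (w 1 * Et w)))
      + ∑ k ∈ Finset.range (mm + 1), (-1 : ℝ) ^ (k + 1) * TD (R (k + 1)) w, ?_, ?_⟩
  · -- order ≤ 2m - 1
    have hY : Ord (2 * mm + 1) (fun w => TD h w + ∑ k ∈ Finset.range (mm + 1),
        (-1 : ℝ) ^ (k + 1) * ((((k + 1) : ℕ) : ℝ) * (w 2 * TD^[k] (pd (k + 1) h) w))) := by
      rcases Nat.eq_zero_or_pos mm with rfl | hmm
      · -- m = 1 : cancellation TD h - u₂ h₁ = u₁ h₀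
        have hval : ∀ w : ℕ → ℝ, TD h w + ∑ k ∈ Finset.range (0 + 1),
            (-1 : ℝ) ^ (k + 1) * ((((k + 1) : ℕ) : ℝ) * (w 2 * TD^[k] (pd (k + 1) h) w))
            = w 1 * pd 0 h w := by
          intro w
          rw [TD_eq_sum hOh w]
          simp only [Finset.sum_range_succ, Finset.sum_range_zero, Function.iterate_zero,
            id_eq, zero_add, pow_one, pow_succ, pow_zero, Nat.cast_one, one_mul, neg_mul,
            neg_neg, Nat.cast_ofNat]
          push_cast
          ring
        exact (((ord_coord (by omega)).mul (hOh.pd 0)).congr fun w => (hval w).symm)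
      · refine Ord.add (Ord.mono (by omega) hOh.TD) (ord_finset_sum _ _ fun k hk => ?_)
        simp only [Finset.mem_range] at hk
        refine (ord_const _).mul ((ord_const _).mul ((ord_coord (by omega)).mul ?_))
        exact Ord.mono (by omega) (nice_TD_iter h1m (nice_pd hNh (k + 1)) k).ord
    have hW1 : Ord (2 * mm + 1) (fun w =>
        (1 / 2 : ℝ) * (w 1 * ∑ k ∈ Finset.range (mm + 1), (-1 : ℝ) ^ k * TD^[k] (pd k h) w)
        + (1 / 2 : ℝ) * ((-1 : ℝ) ^ (mm + 1) * (w 1 * Et w))) := by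
      refine Ord.add ((ord_const _).mul ((ord_coord (by omega)).mul
        (ord_finset_sum _ _ fun k hk => ?_)))
        ((ord_const _).mul ((ord_const _).mul ((ord_coord (by omega)).mul hEtN'.ord)))
      simp only [Finset.mem_range] at hk
      exact (ord_const _).mul
        (Ord.mono (by omega) (nice_TD_iter h1m (nice_pd hNh k) k).ord)
    have hW2 : Ord (2 * mm + 1) (fun w => ∑ k ∈ Finset.range mm,
        (-1 : ℝ) ^ (k + 1) * ((((k + 1) : ℕ) : ℝ) * (w 1 * TD^[k + 1] (pd (k + 1) h) w))
        + (-1 : ℝ) ^ (mm + 1) * ((((mm + 1) : ℕ) : ℝ) * (w 1 * Et w))) := by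
      refine Ord.add (ord_finset_sum _ _ fun k hk => ?_)
        ((ord_const _).mul ((ord_const _).mul ((ord_coord (by omega)).mul hEtN'.ord)))
      simp only [Finset.mem_range] at hk
      refine (ord_const _).mul ((ord_const _).mul ((ord_coord (by omega)).mul ?_))
      exact Ord.mono (by omega) (nice_TD_iter h1m (nice_pd hNh (k + 1)) (k + 1)).ord
    have hW3 : Ord (2 * mm + 1) (fun w =>
        ∑ k ∈ Finset.range (mm + 1), (-1 : ℝ) ^ (k + 1) * TD (R (k + 1)) w) := by
      refine ord_finset_sum _ _ fun k hk => ?_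
      simp only [Finset.mem_range] at hk
      refine (ord_const _).mul ?_
      rcases Nat.eq_zero_or_pos k with rfl | hk1
      · -- R 1 = 0
        have hz : R 1 = fun _ => 0 := funext fun z => (hRspec 1 (by omega) (by omega)).2.1 rfl z
        rw [hz, TD_zero]
        exact ord_const _
      · have hmax : max 1 (mm + 1 + (k + 1) - 2) = mm + k := by
          rw [Nat.max_eq_right (by omega)]
          omega
        have hN := (hRspec (k + 1) (by omega) (by omega)).1
        rw [hmax] at hN
        have := nice_TD (by omega) hN
        exact Ord.mono (by omega) this.ord
    intro z w hzw
    have hzw' : ∀ i ≤ 2 * mm + 1, z i = w i := fun i hi => hzw i (by omega)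
    exact congrArg₂ (· + ·) (congrArg₂ (· + ·) (congrArg₂ (· + ·)
      (hY z w hzw') (hW1 z w hzw')) (hW2 z w hzw')) (hW3 z w hzw')
  · -- the congruence identity
    intro z hz
    rw [hTDmain z hz, hTDX z hz]
    rw [Finset.sum_add_distrib, Finset.sum_add_distrib]
    rw [Finset.sum_range_succ (fun k => (-1 : ℝ) ^ (k + 1) *
      ((((k + 1) : ℕ) : ℝ) * (z 1 * TD^[k + 1] (pd (k + 1) h) z))) mm]
    rw [VD_eq_sum hOh z, Finset.sum_range_succ
      (fun k => (-1 : ℝ) ^ k * TD^[k] (pd k h) z) (mm + 1)]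
    rw [hEteq z hz]
    rw [show 2 * (mm + 1) = (mm + 1) + (mm + 1) from two_mul _]
    push_cast
    ring
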